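/- Over F_q, the set of all q^m affine F_q-rational points of A^m, embedded in P^m as the locus x_0 ≠ 0, is the projective complete intersection V(x_j^q − x_0^{q−1} x_j : j = 1,…,m), and for a ≤ m(q−1) − 1 the generalized Reed–Muller evaluation code C(Γ)_a has minimum distance d ≥ m(q−1) − a + 1. -/

import Mathlib

open MvPolynomial

section ReedMullerAux

set_option linter.unusedSectionVars false

variable {K : Type} [Field K] [Fintype K] [DecidableEq K]

/-- reduce an exponent modulo the relation `x^q = x`. -/
def redExp (q n : ℕ) : ℕ := if n = 0 then 0 else (n - 1) % (q - 1) + 1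

lemma redExp_zero (q : ℕ) : redExp q 0 = 0 := by simp [redExp]

lemma redExp_le_self (q n : ℕ) : redExp q n ≤ n := by
  unfold redExp
  split
  · omega
  · have := Nat.mod_le (n-1) (q-1); omega

lemma redExp_le (q n : ℕ) (hq : 2 ≤ q) : redExp q n ≤ q - 1 := by
  unfold redExp
  split
  · omega
  · have : (n-1) % (q-1) < q - 1 := Nat.mod_lt _ (by omega)
    omega

lemma pow_redExp (x : K) (n : ℕ) : x ^ redExp (Fintype.card K) n = x ^ n := by
  set q := Fintype.card K with hq
  have hq2 : 2 ≤ q := Fintype.one_lt_card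
  rcases eq_or_ne n 0 with rfl | hn
  · simp [redExp]
  rcases eq_or_ne x 0 with rfl | hx
  · rw [zero_pow hn, zero_pow]
    unfold redExp; split <;> omega
  · have h1 : x ^ (q - 1) = 1 := FiniteField.pow_card_sub_one_eq_one x hx
    have hrep : n = (q - 1) * ((n - 1) / (q - 1)) + ((n - 1) % (q - 1) + 1) := by
      have := Nat.div_add_mod (n - 1) (q - 1)
      omega
    conv_rhs => rw [hrep]
    rw [pow_add, pow_mul, h1, one_pow, one_mul]
    unfold redExp
    rw [if_neg hn]

variable {m : ℕ}

/-- The reduction of a multivariate polynomial modulo `x_i^q = x_i`. -/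
noncomputable def reduceP (g : MvPolynomial (Fin m) K) : MvPolynomial (Fin m) K :=
  ∑ s ∈ g.support,
    monomial (Finsupp.mapRange (redExp (Fintype.card K)) (redExp_zero _) s) (coeff s g)

lemma eval_reduceP (g : MvPolynomial (Fin m) K) (v : Fin m → K) :
    eval v (reduceP g) = eval v g := by
  rw [reduceP, map_sum, eval_eq]
  refine Finset.sum_congr rfl fun s hs => ?_
  rw [eval_monomial]
  congr 1
  rw [Finsupp.prod_mapRange_index (fun a => pow_zero _)]
  · exact Finsupp.prod_congr fun i _ => pow_redExp _ _

lemma support_reduceP {g : MvPolynomial (Fin m) K} {t : Fin m →₀ ℕ}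
    (ht : t ∈ (reduceP g).support) :
    ∃ s ∈ g.support, t = Finsupp.mapRange (redExp (Fintype.card K)) (redExp_zero _) s := by
  have := MvPolynomial.support_sum ht
  rw [Finset.mem_biUnion] at this
  obtain ⟨s, hs, hts⟩ := this
  have := support_monomial_subset hts
  rw [Finset.mem_singleton] at this
  exact ⟨s, hs, this⟩

lemma reduceP_mem_restrictDegree (g : MvPolynomial (Fin m) K) :
    reduceP g ∈ restrictDegree (Fin m) K (Fintype.card K - 1) := by
  rw [mem_restrictDegree]
  intro t ht i
  obtain ⟨s, _, rfl⟩ := support_reduceP ht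
  rw [Finsupp.mapRange_apply]
  exact redExp_le _ _ Fintype.one_lt_card

lemma totalDegree_reduceP_le (g : MvPolynomial (Fin m) K) :
    (reduceP g).totalDegree ≤ g.totalDegree := by
  rw [totalDegree]
  refine Finset.sup_le fun t ht => ?_
  obtain ⟨s, hs, rfl⟩ := support_reduceP ht
  have h1 : (Finsupp.mapRange (redExp (Fintype.card K)) (redExp_zero _) s).sum
      (fun _ e => e) ≤ s.sum fun _ e => e := by
    rw [Finsupp.sum_mapRange_index (fun a => rfl)]
    exact Finsupp.sum_le_sum fun i _ => redExp_le_self _ _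
  exact h1.trans (le_totalDegree hs)

lemma totalDegree_le_of_restrictDegree (g : MvPolynomial (Fin m) K) (n : ℕ)
    (hg : g ∈ restrictDegree (Fin m) K n) : g.totalDegree ≤ m * n := by
  rw [mem_restrictDegree] at hg
  rw [totalDegree]
  refine Finset.sup_le fun s hs => ?_
  calc s.sum (fun _ e => e) = ∑ i ∈ s.support, s i := rfl
    _ ≤ ∑ i : Fin m, s i := Finset.sum_le_sum_of_subset (Finset.subset_univ _)
    _ ≤ ∑ _i : Fin m, n := Finset.sum_le_sum fun i _ => hg s hs i
    _ = m * n := by simp [mul_comm]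

lemma nat_aux (A B C : ℕ) (hA : 1 ≤ A) (hB : 1 ≤ B) (hAC : A ≤ C) : A + B - 1 ≤ C * B := by
  obtain ⟨a, rfl⟩ := Nat.exists_eq_add_of_le hA
  obtain ⟨b, rfl⟩ := Nat.exists_eq_add_of_le hB
  have h1 : (1+a) * (1+b) = 1 + a + b + a*b := by ring
  have h2 := Nat.mul_le_mul_right (1+b) hAC
  omega

/-- Key induction: a nonzero reduced polynomial of total degree `t` on `𝔽_q^m`
takes a nonzero value at least `m(q-1) - t + 1` times. -/
lemma weak_RM_bound : ∀ (m : ℕ) (g : MvPolynomial (Fin m) K), g ≠ 0 →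
    g ∈ restrictDegree (Fin m) K (Fintype.card K - 1) →
    m * (Fintype.card K - 1) - g.totalDegree + 1 ≤
      (Finset.univ.filter fun v : Fin m → K => eval v g ≠ 0).card := by
  intro m
  induction m with
  | zero =>
    intro g hg0 hgr
    have hne : ∃ v : Fin 0 → K, eval v g ≠ 0 := by
      by_contra h
      push_neg at h
      exact hg0 (MvPolynomial.eq_zero_of_eval_eq_zero (Fin 0) K g h hgr)
    obtain ⟨v, hv⟩ := hne
    have : 1 ≤ (Finset.univ.filter fun v : Fin 0 → K => eval v g ≠ 0).card :=
      Finset.card_pos.mpr ⟨v, Finset.mem_filter.mpr ⟨Finset.mem_univ _, hv⟩⟩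
    omega
  | succ m ih =>
    intro g hg0 hgr
    set q := Fintype.card K with hqdef
    have hq2 : 2 ≤ q := Fintype.one_lt_card
    rw [mem_restrictDegree] at hgr
    set p := finSuccEquiv K m g with hp
    have hpne : p ≠ 0 := by
      intro h
      exact hg0 ((map_eq_zero_iff _ (finSuccEquiv K m).injective).mp h)
    set d := p.natDegree with hd
    have hdle : d ≤ q - 1 := by
      rw [hd, natDegree_finSuccEquiv, degreeOf_le_iff]
      intro s hs
      exact hgr s hs 0
    set gd := p.coeff d with hgd
    have hgdne : gd ≠ 0 := Polynomial.leadingCoeff_ne_zero.mpr hpne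
    have hgdr : gd ∈ restrictDegree (Fin m) K (q - 1) := by
      rw [mem_restrictDegree]
      intro s hs i
      have hcons : s.cons d ∈ g.support := mem_support_coeff_finSuccEquiv.mp hs
      have := hgr _ hcons i.succ
      rwa [Finsupp.cons_succ] at this
    have hde : gd.totalDegree + d ≤ g.totalDegree :=
      totalDegree_coeff_finSuccEquiv_add_le g d hgdne
    have hT := ih gd hgdne hgdr
    set T := Finset.univ.filter fun x' : Fin m → K => eval x' gd ≠ 0 with hTdef
    have hrow : ∀ x' ∈ T, q - d ≤
        (Finset.univ.filter fun x₀ : K => eval (Fin.cons x₀ x' : Fin (m+1) → K) g ≠ 0).card := by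
      intro x' hx'
      rw [hTdef, Finset.mem_filter] at hx'
      set px := p.map (eval x') with hpx
      have hpxc : px.coeff d ≠ 0 := by
        rw [hpx, Polynomial.coeff_map]
        exact hx'.2
      have hpxne : px ≠ 0 := fun h => hpxc (by simp [h])
      have hroots : (Finset.univ.filter fun x₀ : K => Polynomial.eval x₀ px = 0).card ≤ d := by
        have hsub : (Finset.univ.filter fun x₀ : K => Polynomial.eval x₀ px = 0)
            ⊆ px.roots.toFinset := by
          intro x hx
          rw [Finset.mem_filter] at hx
          rw [Multiset.mem_toFinset, Polynomial.mem_roots hpxne]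
          exact hx.2
        calc (Finset.univ.filter fun x₀ : K => Polynomial.eval x₀ px = 0).card
            ≤ px.roots.toFinset.card := Finset.card_le_card hsub
          _ ≤ Multiset.card px.roots := Multiset.toFinset_card_le _
          _ ≤ px.natDegree := Polynomial.card_roots' px
          _ ≤ d := Polynomial.natDegree_map_le
      have heq : ∀ x₀ : K, eval (Fin.cons x₀ x' : Fin (m+1) → K) g = Polynomial.eval x₀ px := by
        intro x₀
        rw [eval_eq_eval_mv_eval']
      have hsplit := Finset.card_filter_add_card_filter_not
        (s := (Finset.univ : Finset K)) (p := fun x₀ => Polynomial.eval x₀ px = 0)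
      have hcard : (Finset.univ : Finset K).card = q := by simp [hqdef]
      have heqset : (Finset.univ.filter
            fun x₀ : K => eval (Fin.cons x₀ x' : Fin (m+1) → K) g ≠ 0)
          = Finset.univ.filter fun x₀ : K => ¬(Polynomial.eval x₀ px = 0) := by
        apply Finset.filter_congr
        intro x _
        simp [heq x]
      rw [heqset]
      omega
    set S := Finset.univ.filter fun v : Fin (m+1) → K => eval v g ≠ 0 with hSdef
    set B := T.biUnion (fun x' =>
      (Finset.univ.filter fun x₀ : K =>
        eval (Fin.cons x₀ x' : Fin (m+1) → K) g ≠ 0).image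
        fun x₀ => (Fin.cons x₀ x' : Fin (m+1) → K)) with hBdef
    have hBS : B ⊆ S := by
      intro v hv
      rw [hBdef, Finset.mem_biUnion] at hv
      obtain ⟨x', _, hv⟩ := hv
      rw [Finset.mem_image] at hv
      obtain ⟨x₀, hx₀, rfl⟩ := hv
      rw [Finset.mem_filter] at hx₀ ⊢
      exact ⟨Finset.mem_univ _, hx₀.2⟩
    have hBcard : T.card * (q - d) ≤ B.card := by
      rw [hBdef, Finset.card_biUnion]
      · calc T.card * (q - d) = ∑ _x' ∈ T, (q - d) := by rw [Finset.sum_const, smul_eq_mul]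
          _ ≤ _ := by
            refine Finset.sum_le_sum fun x' hx' => ?_
            rw [Finset.card_image_of_injective]
            · exact hrow x' hx'
            · intro a b hab
              have := congrFun hab 0
              simpa using this
      · intro x hx y hy hxy
        simp only [Finset.disjoint_left]
        intro v hv hv'
        rw [Finset.mem_image] at hv hv'
        obtain ⟨a, _, rfl⟩ := hv
        obtain ⟨b, _, hb⟩ := hv'
        apply hxy
        have := congrArg Fin.tail hb
        rw [Fin.tail_cons, Fin.tail_cons] at this
        exact this.symm
    have hegd : gd.totalDegree ≤ m * (q - 1) :=
      totalDegree_le_of_restrictDegree gd _ hgdr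
    have hprod : (m * (q-1) - gd.totalDegree + 1) + (q - d) - 1 ≤ T.card * (q - d) :=
      nat_aux _ _ _ (by omega) (by omega) hT
    have hcards : T.card * (q - d) ≤ S.card := hBcard.trans (Finset.card_le_card hBS)
    have hexp : (m+1) * (q-1) = m * (q-1) + (q-1) := by ring
    omega

end ReedMullerAux

/-- Evaluation of homogeneous degree-`a` polynomials at representatives of points
of `ℙ^m` indexed by a type `ι`. -/
noncomputable def evalMapI (K : Type) [Field K] (ι : Type) (m a : ℕ)
    (p : ι → Fin (m+1) → K) :
    homogeneousSubmodule (Fin (m+1)) K a →ₗ[K] (ι → K) where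
  toFun f t := eval (p t) (f : MvPolynomial (Fin (m+1)) K)
  map_add' f g := by ext t; simp
  map_smul' c f := by ext t; simp [smul_eval]

/-- Generalized Reed–Muller codes: over `𝔽_q`, the set `Γ` of all `q^m` affine
points `[1 : a₁ : ⋯ : a_m]` is the projective complete intersection
`V(x_j^q - x_0^{q-1}x_j : j = 1, …, m)`, and for `a ≤ m(q-1) - 1` every nonzero
codeword of `C(Γ)_a` has Hamming weight at least `m(q-1) - a + 1`. -/
theorem stmt_12 (K : Type) [Field K] [Fintype K] [DecidableEq K] (m a q : ℕ)
    (hq : q = Fintype.card K) (ha : a ≤ m * (q - 1) - 1) :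
    (∀ v : Fin (m+1) → K, v ≠ 0 →
      ((∀ j : Fin m, eval v ((X j.succ) ^ q - (X 0) ^ (q-1) * X j.succ
          : MvPolynomial (Fin (m+1)) K) = 0) ↔
        ∃ (u : Fin m → K) (c : K), c ≠ 0 ∧ v = c • (Fin.cons 1 u : Fin (m+1) → K))) ∧
    ∀ w ∈ LinearMap.range
        (evalMapI K (Fin m → K) m a (fun u => (Fin.cons 1 u : Fin (m+1) → K))),
      w ≠ 0 → m * (q - 1) - a + 1 ≤ hammingNorm w := by
  have hq2 : 2 ≤ q := hq ▸ Fintype.one_lt_card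
  constructor
  · intro v hv
    constructor
    · intro h
      have hv0 : v 0 ≠ 0 := by
        intro h0
        apply hv
        funext i
        refine Fin.cases ?_ ?_ i
        · exact h0
        · intro j
          have hj := h j
          simp only [map_sub, map_mul, map_pow, eval_X, h0,
            zero_pow (show q - 1 ≠ 0 by omega), zero_mul, sub_zero] at hj
          exact pow_eq_zero_iff (show q ≠ 0 by omega) |>.mp hj
      refine ⟨fun j => (v 0)⁻¹ * v j.succ, v 0, hv0, ?_⟩
      funext i
      refine Fin.cases ?_ ?_ i
      · simp [hv0]
      · intro j
        simp [hv0, mul_inv_cancel_left₀]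
    · rintro ⟨u, c, hc, rfl⟩ j
      simp only [map_sub, map_mul, map_pow, eval_X, Pi.smul_apply, Fin.cons_succ,
        Fin.cons_zero, smul_eq_mul, mul_one]
      have hc1 : c ^ (q - 1) = 1 := hq ▸ FiniteField.pow_card_sub_one_eq_one c hc
      have hx : (c * u j) ^ q = c * u j := hq ▸ FiniteField.pow_card (c * u j)
      rw [hx, hc1, one_mul, sub_self]
  · rintro w ⟨f, rfl⟩ hw
    have hfval : ∀ u : Fin m → K,
        evalMapI K (Fin m → K) m a (fun u => (Fin.cons 1 u : Fin (m+1) → K)) f u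
          = eval (Fin.cons 1 u : Fin (m+1) → K) (f : MvPolynomial (Fin (m+1)) K) := by
      intro u; rfl
    -- restrict to the affine chart
    set P := finSuccEquiv K m (f : MvPolynomial (Fin (m+1)) K) with hP
    set g₀ : MvPolynomial (Fin m) K := Polynomial.eval (1 : MvPolynomial (Fin m) K) P with hg₀
    have heval : ∀ u : Fin m → K,
        eval u g₀ = eval (Fin.cons 1 u : Fin (m+1) → K) (f : MvPolynomial (Fin (m+1)) K) := by
      intro u
      rw [eval_eq_eval_mv_eval', hg₀, Polynomial.eval_one_map]
    have hfne : (f : MvPolynomial (Fin (m+1)) K) ≠ 0 := by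
      intro h0
      apply hw
      funext u
      rw [hfval u, h0, map_zero]
      rfl
    have hftd : (f : MvPolynomial (Fin (m+1)) K).totalDegree ≤ a :=
      (f.2 : (f : MvPolynomial (Fin (m+1)) K).IsHomogeneous a).totalDegree_le
    have hg₀td : g₀.totalDegree ≤ a := by
      rw [hg₀, Polynomial.eval_eq_sum_range]
      simp only [one_pow, mul_one]
      refine (totalDegree_finset_sum _ _).trans (Finset.sup_le fun i _ => ?_)
      rcases eq_or_ne (P.coeff i) 0 with h0 | h0
      · simp [h0]
      · have := totalDegree_coeff_finSuccEquiv_add_le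
          (f : MvPolynomial (Fin (m+1)) K) i h0
        rw [← hP] at this
        omega
    set g := reduceP g₀ with hgdef
    have hgval : ∀ u : Fin m → K,
        eval u g = eval (Fin.cons 1 u : Fin (m+1) → K) (f : MvPolynomial (Fin (m+1)) K) := by
      intro u
      rw [hgdef, eval_reduceP, heval]
    have hgne : g ≠ 0 := by
      intro h0
      apply hw
      funext u
      rw [hfval u, ← hgval u, h0, map_zero]
      rfl
    have hbound := weak_RM_bound m g hgne (reduceP_mem_restrictDegree g₀)
    have hgtd : g.totalDegree ≤ a := (totalDegree_reduceP_le g₀).trans hg₀td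
    have hnorm : hammingNorm
        (evalMapI K (Fin m → K) m a (fun u => (Fin.cons 1 u : Fin (m+1) → K)) f)
        = (Finset.univ.filter fun u : Fin m → K => eval u g ≠ 0).card := by
      rw [hammingNorm]
      congr 1
      apply Finset.filter_congr
      intro u _
      rw [hfval u, ← hgval u]
    rw [hnorm, hq]
    have := Nat.sub_le_sub_left (hgtd.trans (le_refl a)) (m * (Fintype.card K - 1))
    have h2 := Nat.sub_le_sub_left hgtd (m * (Fintype.card K - 1))
    omega
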